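/- If $K_n \to K$ in the Hausdorff metric with all $K_n$ having at most $m$ connected components, then $K$ has at most $m$ connected components. -/

import Mathlib

open Filter MeasureTheory Set
open scoped Topology

/-- In a totally separated space, finitely many distinct points can be separated by a
clopen partition of the whole space. -/
lemma exists_clopen_partition {Y : Type*} [TopologicalSpace Y] [TotallySeparatedSpace Y]
    {k : ℕ} (p : Fin (k + 1) → Y) (hp : Function.Injective p) :
    ∃ V : Fin (k + 1) → Set Y, (∀ i, IsClopen (V i)) ∧ (∀ i, p i ∈ V i) ∧
      (∀ i j, i ≠ j → Disjoint (V i) (V j)) ∧ (⋃ i, V i) = Set.univ := by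
  have hU : ∀ i j : Fin (k + 1), ∃ U : Set Y, IsClopen U ∧ (i ≠ j → p i ∈ U ∧ p j ∉ U) := by
    intro i j
    by_cases h : i = j
    · exact ⟨Set.univ, isClopen_univ, fun hij => absurd h hij⟩
    · obtain ⟨U, hUc, hx, hy⟩ := exists_isClopen_of_totally_separated
        (fun e : p i = p j => h (hp e))
      exact ⟨U, hUc, fun _ => ⟨hx, hy⟩⟩
  choose U hUc hUm using hU
  set W : Fin (k + 1) → Set Y := fun i => ⋂ j, ⋂ (_ : j ≠ i), (U i j ∩ (U j i)ᶜ) with hWdef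
  have hWc : ∀ i, IsClopen (W i) := by
    intro i
    constructor
    · exact isClosed_iInter fun j => isClosed_iInter fun _ =>
        ((hUc i j).isClosed.inter (hUc j i).isOpen.isClosed_compl)
    · exact isOpen_iInter_of_finite fun j => isOpen_iInter_of_finite fun _ =>
        ((hUc i j).isOpen.inter (hUc j i).isClosed.isOpen_compl)
  have hWm : ∀ i, p i ∈ W i := by
    intro i
    refine Set.mem_iInter₂.mpr fun j hj => ⟨(hUm i j (Ne.symm hj)).1, (hUm j i hj).2⟩
  have hWsub : ∀ i j, i ≠ j → W i ⊆ U i j ∩ (U j i)ᶜ := by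
    intro i j hij x hx
    exact Set.mem_iInter₂.mp hx j (Ne.symm hij)
  have hWd : ∀ i j, i ≠ j → Disjoint (W i) (W j) := by
    intro i j hij
    rw [Set.disjoint_left]
    intro x hxi hxj
    exact (hWsub i j hij hxi).2 (hWsub j i (Ne.symm hij) hxj).1
  refine ⟨fun i => if i = 0 then (⋃ j, ⋃ (_ : j ≠ (0 : Fin (k + 1))), W j)ᶜ else W i,
    ?_, ?_, ?_, ?_⟩
  · intro i
    by_cases h : i = 0 <;> simp only [h, if_pos, if_neg, if_true, reduceIte]
    · constructor
      · exact (isOpen_iUnion fun j => isOpen_iUnion fun _ => (hWc j).isOpen).isClosed_compl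
      · exact (isClosed_iUnion_of_finite fun j => isClosed_iUnion_of_finite fun _ =>
          (hWc j).isClosed).isOpen_compl
    · exact hWc i
  · intro i
    by_cases h : i = 0 <;> simp only [h, reduceIte]
    · intro hmem
      obtain ⟨j, hj, hmem⟩ := Set.mem_iUnion₂.mp hmem
      exact (hWsub j 0 hj hmem).2 (hUm 0 j (Ne.symm hj)).1
    · exact hWm i
  · intro i j hij
    by_cases hi : i = 0 <;> by_cases hj : j = 0 <;>
      simp only [hi, hj, reduceIte]
    · exact absurd (hi.trans hj.symm) hij
    · exact Set.disjoint_left.mpr fun x hx hxj =>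
        hx (Set.mem_iUnion₂.mpr ⟨j, hj, hxj⟩)
    · exact Set.disjoint_right.mpr fun x hx hxi =>
        hx (Set.mem_iUnion₂.mpr ⟨i, hi, hxi⟩)
    · exact hWd i j hij
  · ext x
    simp only [Set.mem_univ, iff_true, Set.mem_iUnion]
    by_cases h : ∃ j : Fin (k + 1), j ≠ 0 ∧ x ∈ W j
    · obtain ⟨j, hj, hx⟩ := h
      exact ⟨j, by simp only [hj, reduceIte]; exact hx⟩
    · push_neg at h
      refine ⟨0, ?_⟩
      simp only [reduceIte]
      intro hmem
      obtain ⟨j, hj, hmem⟩ := Set.mem_iUnion₂.mp hmem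
      exact h j hj hmem
theorem components_le_of_hausdorff_limit
    (Ω : Set (EuclideanSpace ℝ (Fin 2))) (hΩ : IsCompact Ω)
    (m : ℕ) (hm : 1 ≤ m)
    (K : ℕ → Set (EuclideanSpace ℝ (Fin 2))) (Klim : Set (EuclideanSpace ℝ (Fin 2)))
    (hKc : ∀ n, IsCompact (K n)) (hKΩ : ∀ n, K n ⊆ Ω)
    (hfin : ∀ n, Finite (ConnectedComponents (K n)))
    (hcard : ∀ n, Nat.card (ConnectedComponents (K n)) ≤ m)
    (hKlim : IsCompact Klim) (hKlimΩ : Klim ⊆ Ω)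
    (hconv : Tendsto (fun n => EMetric.hausdorffEdist (K n) Klim) atTop (𝓝 0)) :
    Finite (ConnectedComponents Klim) ∧ Nat.card (ConnectedComponents Klim) ≤ m := by
  by_contra hcon
  haveI : CompactSpace ↥Klim := isCompact_iff_compactSpace.mp hKlim
  haveI : CompactSpace (ConnectedComponents ↥Klim) :=
    ⟨by rw [← ConnectedComponents.range_coe]
        exact isCompact_range ConnectedComponents.continuous_coe⟩
  haveI : TotallySeparatedSpace (ConnectedComponents ↥Klim) :=
    loc_compact_t2_tot_disc_iff_tot_sep.mp inferInstance
  -- Get `m + 1` distinct connected components of `Klim`.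
  have hinj : ∃ p : Fin (m + 1) → ConnectedComponents ↥Klim, Function.Injective p := by
    by_cases hF : Finite (ConnectedComponents ↥Klim)
    · have hcard' : m < Nat.card (ConnectedComponents ↥Klim) := by
        by_contra h; push_neg at h; exact hcon ⟨hF, h⟩
      haveI := Fintype.ofFinite (ConnectedComponents ↥Klim)
      have hle : Fintype.card (Fin (m + 1)) ≤ Fintype.card (ConnectedComponents ↥Klim) := by
        rw [Fintype.card_fin]; rw [Nat.card_eq_fintype_card] at hcard'; omega
      obtain ⟨f⟩ := Function.Embedding.nonempty_of_card_le hle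
      exact ⟨f, f.injective⟩
    · haveI : Infinite (ConnectedComponents ↥Klim) := not_finite_iff_infinite.mp hF
      exact ⟨fun i => Infinite.natEmbedding _ i,
        (Infinite.natEmbedding _).injective.comp Fin.val_injective⟩
  obtain ⟨p, hp⟩ := hinj
  obtain ⟨V, hVc, hVm, hVd, hVu⟩ := exists_clopen_partition p hp
  -- Pieces of `Klim` as subsets of the ambient space.
  set A : Fin (m + 1) → Set (EuclideanSpace ℝ (Fin 2)) :=
    fun i => Subtype.val '' (ConnectedComponents.mk ⁻¹' V i) with hA
  have hAc : ∀ i, IsCompact (A i) := fun i =>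
    (((hVc i).isClosed.preimage ConnectedComponents.continuous_coe).isCompact).image
      continuous_subtype_val
  have hAsub : ∀ i, A i ⊆ Klim := fun i => Subtype.coe_image_subset _ _
  have hAne : ∀ i, (A i).Nonempty := by
    intro i
    obtain ⟨x, hx⟩ := ConnectedComponents.surjective_coe (p i)
    exact ⟨x, x, by rw [Set.mem_preimage, hx]; exact hVm i, rfl⟩
  have hAd : ∀ i j, i ≠ j → Disjoint (A i) (A j) := fun i j hij =>
    (Set.disjoint_image_iff Subtype.val_injective).mpr ((hVd i j hij).preimage _)
  have hAcov : ∀ x, x ∈ Klim → ∃ i, x ∈ A i := by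
    intro x hx
    have hmem : ConnectedComponents.mk (⟨x, hx⟩ : ↥Klim) ∈ ⋃ i, V i :=
      hVu ▸ Set.mem_univ _
    obtain ⟨i, hi⟩ := Set.mem_iUnion.mp hmem
    exact ⟨i, ⟨⟨x, hx⟩, hi, rfl⟩⟩
  -- A uniform radius of disjoint thickenings.
  have hthick : ∀ i j : Fin (m + 1), ∃ δ : ℝ, 0 < δ ∧ (i ≠ j →
      Disjoint (Metric.thickening δ (A i)) (Metric.thickening δ (A j))) := by
    intro i j
    by_cases h : i = j
    · exact ⟨1, one_pos, fun hij => absurd h hij⟩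
    · obtain ⟨δ, hδ, hdisj⟩ := (hAd i j h).exists_thickenings (hAc i) (hAc j).isClosed
      exact ⟨δ, hδ, fun _ => hdisj⟩
  choose d hd0 hdd using hthick
  have hne : ((Finset.univ : Finset (Fin (m + 1))) ×ˢ (Finset.univ : Finset (Fin (m + 1)))).Nonempty :=
    ⟨(0, 0), by simp⟩
  set ε := ((Finset.univ : Finset (Fin (m + 1))) ×ˢ (Finset.univ : Finset (Fin (m + 1)))).inf' hne
    (fun q : Fin (m + 1) × Fin (m + 1) => d q.1 q.2) with hεdef
  have hε0 : 0 < ε := (Finset.lt_inf'_iff hne).mpr fun q _ => hd0 q.1 q.2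
  have hεle : ∀ i j, ε ≤ d i j := fun i j =>
    Finset.inf'_le _ (by simp : (i, j) ∈ (Finset.univ : Finset (Fin (m + 1))) ×ˢ (Finset.univ : Finset (Fin (m + 1))))
  have hεd : ∀ i j, i ≠ j →
      Disjoint (Metric.thickening ε (A i)) (Metric.thickening ε (A j)) := fun i j hij =>
    (hdd i j hij).mono (Metric.thickening_mono (hεle i j) _)
      (Metric.thickening_mono (hεle i j) _)
  -- Pick `n` with Hausdorff distance below `ε`.
  have hev : ∀ᶠ n in atTop, EMetric.hausdorffEdist (K n) Klim < ENNReal.ofReal ε :=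
    hconv.eventually (gt_mem_nhds (ENNReal.ofReal_pos.mpr hε0))
  obtain ⟨n, hn⟩ := hev.exists
  -- Open cover of `K n` by preimages of the thickenings.
  set u : Fin (m + 1) → Set ↥(K n) :=
    fun i => Subtype.val ⁻¹' Metric.thickening ε (A i) with hu
  have huo : ∀ i, IsOpen (u i) := fun i =>
    Metric.isOpen_thickening.preimage continuous_subtype_val
  have hud : ∀ i j, i ≠ j → Disjoint (u i) (u j) := fun i j hij =>
    (hεd i j hij).preimage _
  have hucov : ∀ x : ↥(K n), ∃ i, x ∈ u i := by
    intro x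
    obtain ⟨y, hy, hxy⟩ := EMetric.exists_edist_lt_of_hausdorffEdist_lt x.2 hn
    obtain ⟨i, hi⟩ := hAcov y hy
    exact ⟨i, Metric.mem_thickening_iff.mpr ⟨y, hi, edist_lt_ofReal.mp hxy⟩⟩
  have hune : ∀ i, ∃ x : ↥(K n), x ∈ u i := by
    intro i
    obtain ⟨a, ha⟩ := hAne i
    have hn' : EMetric.hausdorffEdist Klim (K n) < ENNReal.ofReal ε := by
      rw [show EMetric.hausdorffEdist Klim (K n) = EMetric.hausdorffEdist (K n) Klim from
        Metric.hausdorffEDist_comm]; exact hn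
    obtain ⟨x, hx, hax⟩ := EMetric.exists_edist_lt_of_hausdorffEdist_lt (hAsub i ha) hn'
    exact ⟨⟨x, hx⟩, Metric.mem_thickening_iff.mpr
      ⟨a, ha, by rw [dist_comm]; exact edist_lt_ofReal.mp hax⟩⟩
  -- A preconnected set meets only one of the `u i`.
  have key : ∀ C : Set ↥(K n), IsPreconnected C → ∀ i j (x y : ↥(K n)),
      x ∈ C → y ∈ C → x ∈ u i → y ∈ u j → i = j := by
    intro C hC i j x y hxC hyC hxu hyu
    by_contra hij
    have hsub : C ⊆ u i ∪ ⋃ k, ⋃ (_ : k ≠ i), u k := by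
      intro z _
      obtain ⟨k, hk⟩ := hucov z
      by_cases h : k = i
      · exact Or.inl (h ▸ hk)
      · exact Or.inr (Set.mem_iUnion₂.mpr ⟨k, h, hk⟩)
    obtain ⟨z, hzC, hzu, hzv⟩ := hC (u i) (⋃ k, ⋃ (_ : k ≠ i), u k) (huo i)
      (isOpen_iUnion fun k => isOpen_iUnion fun _ => huo k) hsub ⟨x, hxC, hxu⟩
      ⟨y, hyC, Set.mem_iUnion₂.mpr ⟨j, Ne.symm hij, hyu⟩⟩
    obtain ⟨k, hk, hzk⟩ := Set.mem_iUnion₂.mp hzv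
    exact Set.disjoint_left.mp (hud i k (Ne.symm hk)) hzu hzk
  -- Conclude: `K n` has at least `m + 1` components.
  choose xw hxw using hune
  have hinj2 : Function.Injective fun i => ConnectedComponents.mk (xw i) := by
    intro i j hij2
    have hcc : connectedComponent (xw i) = connectedComponent (xw j) :=
      ConnectedComponents.coe_eq_coe.mp hij2
    have hmemj : xw j ∈ connectedComponent (xw i) := hcc ▸ mem_connectedComponent
    exact key (connectedComponent (xw i)) isPreconnected_connectedComponent i j (xw i) (xw j)
      mem_connectedComponent hmemj (hxw i) (hxw j)
  haveI := hfin n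
  have hge : m + 1 ≤ Nat.card (ConnectedComponents ↥(K n)) := by
    calc m + 1 = Nat.card (Fin (m + 1)) := by simp
      _ ≤ _ := Nat.card_le_card_of_injective _ hinj2
  have := hcard n
  omega
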